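/- Let k ∈ {1,2} and let w₁, w₂, w₃ : (0,∞) → (0,∞) be decreasing functions with w₁(r)w₂(r)w₃(r) = r^{-2} for all r > 0. Then there is an absolute constant C > 0 such that for all measurable ψ₁, ψ₂, ψ₃ : (0,∞) → ℂ, ‖N_{3,k}(ψ₁,ψ₂,ψ₃)‖_{L²} ≤ C ∏_{j=1}^{3} ‖w_j ψ_j‖_{L²}. -/

import Mathlib

open MeasureTheory Set
open scoped ENNReal

/-- The measure `2π r dr` on `(0,∞)`. -/
noncomputable def rmeas : Measure ℝ :=
  (volume.restrict (Set.Ioi (0:ℝ))).withDensity (fun r => ENNReal.ofReal (2 * Real.pi * r))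

/-- `Re(conj ψ₁ ψ₂)(r)`. -/
noncomputable def Re2 (ψ₁ ψ₂ : ℝ → ℂ) (r : ℝ) : ℝ := ((starRingEnd ℂ) (ψ₁ r) * ψ₂ r).re

/-- `A_θ[ψ₁,ψ₂](r) = -(1/2)∫₀^r Re(conj ψ₁ ψ₂)(r') r' dr'`. -/
noncomputable def Atheta2 (ψ₁ ψ₂ : ℝ → ℂ) (r : ℝ) : ℝ :=
  -(1/2) * ∫ t in (0:ℝ)..r, Re2 ψ₁ ψ₂ t * t

/-- The nonlocal cubic nonlinearities `N_{3,1}`, `N_{3,2}`. -/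
noncomputable def N3 (k : ℕ) (ψ₁ ψ₂ ψ₃ : ℝ → ℂ) (r : ℝ) : ℂ :=
  match k with
  | 1 => ((2 / r ^ 2 * Atheta2 ψ₁ ψ₂ r : ℝ) : ℂ) * ψ₃ r
  | _ => -(((∫ t in Set.Ioi r, Re2 ψ₁ ψ₂ t / t) : ℝ) : ℂ) * ψ₃ r

lemma mul_le_mul_left' {b c : ℝ≥0∞} (h : b ≤ c) (a : ℝ≥0∞) : a * b ≤ a * c := by gcongr

lemma mul_le_mul_right' {b c : ℝ≥0∞} (h : b ≤ c) (a : ℝ≥0∞) : b * a ≤ c * a := by gcongr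

lemma Measurable.ennnorm {f : ℝ → ℂ} (hf : Measurable f) :
    Measurable (fun x => (‖f x‖₊ : ℝ≥0∞)) := hf.enorm

lemma eLpNorm_eq_lintegral_rpow_nnnorm {f : ℝ → ℂ} {p : ℝ≥0∞} {μ : Measure ℝ}
    (hp0 : p ≠ 0) (hp : p ≠ ⊤) :
    eLpNorm f p μ = (∫⁻ x, (‖f x‖₊ : ℝ≥0∞) ^ p.toReal ∂μ) ^ (1 / p.toReal) :=
  eLpNorm_eq_lintegral_rpow_enorm hp0 hp

lemma ofReal_norm_eq_coe_nnnorm (a : ℂ) : ENNReal.ofReal ‖a‖ = (‖a‖₊ : ℝ≥0∞) := by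
  rw [← enorm_eq_nnnorm, ofReal_norm_eq_enorm]

lemma ennnorm_integral_le_lintegral_ennnorm {μ : Measure ℝ} (f : ℝ → ℝ) :
    (‖∫ a, f a ∂μ‖₊ : ℝ≥0∞) ≤ ∫⁻ a, ‖f a‖₊ ∂μ :=
  enorm_integral_le_lintegral_enorm f

lemma Real.ennnorm_eq_ofReal_abs (r : ℝ) : (‖r‖₊ : ℝ≥0∞) = ENNReal.ofReal |r| :=
  Real.enorm_eq_ofReal_abs r

lemma Real.ennnorm_eq_ofReal {r : ℝ} (hr : 0 ≤ r) : (‖r‖₊ : ℝ≥0∞) = ENNReal.ofReal r :=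
  Real.enorm_eq_ofReal hr

lemma ENNReal.two_ne_top : (2:ℝ≥0∞) ≠ ⊤ := by simp

lemma weight_meas_aux (w : ℝ → ℝ) (hmono : ∀ r s : ℝ, 0 < r → r ≤ s → w s ≤ w r) :
    ∃ V : ℝ → ℝ≥0∞, Measurable V ∧ ∀ r : ℝ, 0 < r → V r = ENNReal.ofReal (w r) := by
  refine ⟨fun r => ⨆ n : ℕ, ENNReal.ofReal (w (max r (1/(n+1)))), ?_, ?_⟩
  · refine Measurable.iSup fun n => Measurable.ennreal_ofReal (Antitone.measurable ?_)
    intro a b hab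
    exact hmono _ _ (lt_of_lt_of_le (by positivity) (le_max_right a (1/((n:ℝ)+1))))
      (max_le_max hab le_rfl)
  · intro r hr
    refine le_antisymm (iSup_le fun n => ENNReal.ofReal_le_ofReal
      (hmono r _ hr (le_max_left _ _))) ?_
    obtain ⟨n, hn⟩ := exists_nat_one_div_lt hr
    calc ENNReal.ofReal (w r) = ENNReal.ofReal (w (max r (1/((n:ℝ)+1)))) := by
          rw [max_eq_left hn.le]
      _ ≤ ⨆ n : ℕ, ENNReal.ofReal (w (max r (1/(n+1)))) := le_iSup
            (fun n : ℕ => ENNReal.ofReal (w (max r (1/((n:ℝ)+1))))) n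

lemma rmeas_compl_null : rmeas ((Set.Ioi (0:ℝ))ᶜ) = 0 := by
  rw [rmeas, withDensity_apply _ measurableSet_Ioi.compl]
  refine setLIntegral_measure_zero _ _ ?_
  rw [Measure.restrict_apply measurableSet_Ioi.compl, compl_inter_self]
  simp

lemma rmeas_ae_pos : ∀ᵐ r ∂rmeas, 0 < r := by
  rw [MeasureTheory.ae_iff]
  refine measure_mono_null (fun r hr => ?_) rmeas_compl_null
  simpa using hr

lemma lintegral_rmeas (g : ℝ → ℝ≥0∞) :
    ∫⁻ r, g r ∂rmeas = ∫⁻ r in Set.Ioi (0:ℝ), ENNReal.ofReal (2 * Real.pi * r) * g r := by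
  rw [rmeas, lintegral_withDensity_eq_lintegral_mul_non_measurable]
  · rfl
  · exact (measurable_const.mul measurable_id).ennreal_ofReal
  · exact ae_of_all _ fun r => ENNReal.ofReal_lt_top

lemma CS_aux (V₁ V₂ : ℝ → ℝ≥0∞) (ψ₁ ψ₂ : ℝ → ℂ) (w₁ w₂ : ℝ → ℝ)
    (μ : Measure ℝ)
    (hμ : ∀ g : ℝ → ℝ≥0∞, ∫⁻ r, g r ∂μ = ∫⁻ r in Set.Ioi (0:ℝ), ENNReal.ofReal (2 * Real.pi * r) * g r)
    (hV₁m : Measurable V₁) (hV₂m : Measurable V₂)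
    (hm₁ : Measurable ψ₁) (hm₂ : Measurable ψ₂)
    (hw₁ : ∀ r : ℝ, 0 < r → 0 < w₁ r) (hw₂ : ∀ r : ℝ, 0 < r → 0 < w₂ r)
    (hV₁ : ∀ r : ℝ, 0 < r → V₁ r = ENNReal.ofReal (w₁ r))
    (hV₂ : ∀ r : ℝ, 0 < r → V₂ r = ENNReal.ofReal (w₂ r)) :
    ∫⁻ t in Set.Ioi (0:ℝ), V₁ t * ‖ψ₁ t‖₊ * (V₂ t * ‖ψ₂ t‖₊) * ENNReal.ofReal t ≤
      eLpNorm (fun r => ((w₁ r : ℝ) : ℂ) * ψ₁ r) 2 μ *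
      eLpNorm (fun r => ((w₂ r : ℝ) : ℂ) * ψ₂ r) 2 μ := by
  have h2t : (2:ℝ≥0∞).toReal = 2 := by norm_num
  set ρ : ℝ → ℝ≥0∞ := fun t => (ENNReal.ofReal (2 * Real.pi * t)) ^ ((1:ℝ)/2) with hρ
  have hρm : Measurable ρ := (measurable_const.mul measurable_id).ennreal_ofReal.pow_const _
  set f : ℝ → ℝ≥0∞ := fun t => ρ t * (V₁ t * ‖ψ₁ t‖₊) with hf
  set g : ℝ → ℝ≥0∞ := fun t => ρ t * (V₂ t * ‖ψ₂ t‖₊) with hg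
  have hfm : Measurable f := hρm.mul (hV₁m.mul hm₁.ennnorm)
  have hgm : Measurable g := hρm.mul (hV₂m.mul hm₂.ennnorm)
  have hρsq : ∀ t : ℝ, 0 < t → ρ t * ρ t = ENNReal.ofReal (2 * Real.pi * t) := by
    intro t ht
    have hpos : (0:ℝ) < 2 * Real.pi * t := by positivity
    rw [hρ]
    simp only
    rw [← ENNReal.rpow_add _ _ (by simp [ENNReal.ofReal_eq_zero, not_le, hpos])
      ENNReal.ofReal_ne_top]
    norm_num
  have hE : ∀ (w : ℝ → ℝ) (ψ : ℝ → ℂ) (V : ℝ → ℝ≥0∞),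
      (∀ r : ℝ, 0 < r → V r = ENNReal.ofReal (w r)) → (∀ r : ℝ, 0 < r → 0 ≤ w r) →
      (∫⁻ t in Set.Ioi (0:ℝ), (ρ t * (V t * ‖ψ t‖₊)) ^ (2:ℝ)) ^ ((1:ℝ)/2)
        = eLpNorm (fun r => ((w r : ℝ) : ℂ) * ψ r) 2 μ := by
    intro w ψ V hV hw
    rw [eLpNorm_eq_lintegral_rpow_nnnorm two_ne_zero ENNReal.two_ne_top, h2t, hμ]
    congr 1
    refine setLIntegral_congr_fun measurableSet_Ioi (fun t ht => ?_)
    rw [ENNReal.mul_rpow_of_nonneg _ _ (by norm_num : (0:ℝ) ≤ 2)]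
    rw [hρ]
    simp only
    rw [← ENNReal.rpow_mul]
    norm_num
    congr 2
    rw [hV t ht, ← Real.ennnorm_eq_ofReal (hw t ht)]
  calc ∫⁻ t in Set.Ioi (0:ℝ), V₁ t * ‖ψ₁ t‖₊ * (V₂ t * ‖ψ₂ t‖₊) * ENNReal.ofReal t
      ≤ ∫⁻ t in Set.Ioi (0:ℝ), (f * g) t := by
        refine setLIntegral_mono' measurableSet_Ioi fun t ht => ?_
        have h1 : ENNReal.ofReal t ≤ ρ t * ρ t := by
          rw [hρsq t ht]
          exact ENNReal.ofReal_le_ofReal (by nlinarith [Real.pi_gt_three, Set.mem_Ioi.mp ht])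
        calc V₁ t * ‖ψ₁ t‖₊ * (V₂ t * ‖ψ₂ t‖₊) * ENNReal.ofReal t
            ≤ V₁ t * ‖ψ₁ t‖₊ * (V₂ t * ‖ψ₂ t‖₊) * (ρ t * ρ t) := mul_le_mul_left' h1 _
          _ = (f * g) t := by simp only [hf, hg, Pi.mul_apply]; ring
    _ ≤ (∫⁻ t in Set.Ioi (0:ℝ), f t ^ (2:ℝ)) ^ ((1:ℝ)/2) *
        (∫⁻ t in Set.Ioi (0:ℝ), g t ^ (2:ℝ)) ^ ((1:ℝ)/2) :=
        ENNReal.lintegral_mul_le_Lp_mul_Lq _ (by constructor <;> norm_num)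
          hfm.aemeasurable hgm.aemeasurable
    _ = eLpNorm (fun r => ((w₁ r : ℝ) : ℂ) * ψ₁ r) 2 μ *
        eLpNorm (fun r => ((w₂ r : ℝ) : ℂ) * ψ₂ r) 2 μ := by
        rw [hE w₁ ψ₁ V₁ hV₁ (fun r hr => (hw₁ r hr).le),
          hE w₂ ψ₂ V₂ hV₂ (fun r hr => (hw₂ r hr).le)]

/-- Nonlinear estimates (weighted `L²`-type) for `N_{3,k}`, `k ∈ {1,2}`. -/
theorem nonlinear_estimates_weightedL2_cubic :
    ∃ C : ℝ, 0 < C ∧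
      ∀ (k : ℕ), (k = 1 ∨ k = 2) →
      ∀ w₁ w₂ w₃ : ℝ → ℝ,
        (∀ r : ℝ, 0 < r → 0 < w₁ r) → (∀ r : ℝ, 0 < r → 0 < w₂ r) →
        (∀ r : ℝ, 0 < r → 0 < w₃ r) →
        (∀ r s : ℝ, 0 < r → r ≤ s → w₁ s ≤ w₁ r) →
        (∀ r s : ℝ, 0 < r → r ≤ s → w₂ s ≤ w₂ r) →
        (∀ r s : ℝ, 0 < r → r ≤ s → w₃ s ≤ w₃ r) →
        (∀ r : ℝ, 0 < r → w₁ r * w₂ r * w₃ r = (r ^ 2)⁻¹) →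
        ∀ ψ₁ ψ₂ ψ₃ : ℝ → ℂ,
          Measurable ψ₁ → Measurable ψ₂ → Measurable ψ₃ →
          eLpNorm (N3 k ψ₁ ψ₂ ψ₃) 2 rmeas ≤
            ENNReal.ofReal C
              * eLpNorm (fun r => ((w₁ r : ℝ) : ℂ) * ψ₁ r) 2 rmeas
              * eLpNorm (fun r => ((w₂ r : ℝ) : ℂ) * ψ₂ r) 2 rmeas
              * eLpNorm (fun r => ((w₃ r : ℝ) : ℂ) * ψ₃ r) 2 rmeas := by
  refine ⟨1, one_pos, ?_⟩
  intro k hk w₁ w₂ w₃ hw₁ hw₂ hw₃ hd₁ hd₂ hd₃ hprod ψ₁ ψ₂ ψ₃ hm₁ hm₂ hm₃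
  obtain ⟨V₁, hV₁m, hV₁⟩ := weight_meas_aux w₁ hd₁
  obtain ⟨V₂, hV₂m, hV₂⟩ := weight_meas_aux w₂ hd₂
  obtain ⟨V₃, hV₃m, hV₃⟩ := weight_meas_aux w₃ hd₃
  have h2t : (2:ℝ≥0∞).toReal = 2 := by norm_num
  set P : ℝ → ℝ≥0∞ := fun t => V₁ t * ‖ψ₁ t‖₊ * (V₂ t * ‖ψ₂ t‖₊) * ENNReal.ofReal t with hP
  have hPm : Measurable P :=
    ((hV₁m.mul hm₁.ennnorm).mul (hV₂m.mul hm₂.ennnorm)).mul measurable_id.ennreal_ofReal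
  set J : ℝ≥0∞ := ∫⁻ t in Set.Ioi (0:ℝ), P t with hJ
  set E₁ := eLpNorm (fun r => ((w₁ r : ℝ) : ℂ) * ψ₁ r) 2 rmeas with hE₁
  set E₂ := eLpNorm (fun r => ((w₂ r : ℝ) : ℂ) * ψ₂ r) 2 rmeas with hE₂
  set E₃ := eLpNorm (fun r => ((w₃ r : ℝ) : ℂ) * ψ₃ r) 2 rmeas with hE₃
  -- the real form of the integrand of J
  have hPval : ∀ t : ℝ, 0 < t →
      P t = ENNReal.ofReal (w₁ t * ‖ψ₁ t‖ * (w₂ t * ‖ψ₂ t‖) * t) := by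
    intro t ht
    rw [hP]
    simp only
    rw [hV₁ t ht, hV₂ t ht, ← ofReal_norm_eq_coe_nnnorm, ← ofReal_norm_eq_coe_nnnorm,
      ← ENNReal.ofReal_mul (hw₁ t ht).le, ← ENNReal.ofReal_mul (hw₂ t ht).le,
      ← ENNReal.ofReal_mul (mul_nonneg (hw₁ t ht).le (norm_nonneg _)),
      ← ENNReal.ofReal_mul (mul_nonneg (mul_nonneg (hw₁ t ht).le (norm_nonneg _))
        (mul_nonneg (hw₂ t ht).le (norm_nonneg _)))]
  have hre : ∀ t : ℝ, |Re2 ψ₁ ψ₂ t| ≤ ‖ψ₁ t‖ * ‖ψ₂ t‖ := by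
    intro t
    calc |Re2 ψ₁ ψ₂ t| ≤ ‖(starRingEnd ℂ) (ψ₁ t) * ψ₂ t‖ :=
          Complex.abs_re_le_norm _
      _ = ‖ψ₁ t‖ * ‖ψ₂ t‖ := by
          rw [norm_mul, Complex.norm_conj]
  -- Cauchy-Schwarz: J ≤ E₁ * E₂
  have hCS : J ≤ E₁ * E₂ := by
    rw [hJ, hE₁, hE₂]
    simp only [hP]
    exact CS_aux V₁ V₂ ψ₁ ψ₂ w₁ w₂ rmeas lintegral_rmeas hV₁m hV₂m hm₁ hm₂ hw₁ hw₂ hV₁ hV₂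
  have hIocJ : ∀ r : ℝ, 0 < r →
      (‖(∫ t in (0:ℝ)..r, Re2 ψ₁ ψ₂ t * t)‖₊ : ℝ≥0∞) ≤ ENNReal.ofReal (r^2 * w₃ r) * J := by
    intro r hr
    rw [intervalIntegral.integral_of_le hr.le]
    calc (‖(∫ t in Set.Ioc (0:ℝ) r, Re2 ψ₁ ψ₂ t * t)‖₊ : ℝ≥0∞)
        ≤ ∫⁻ t in Set.Ioc (0:ℝ) r, ‖Re2 ψ₁ ψ₂ t * t‖₊ :=
          ennnorm_integral_le_lintegral_ennnorm _
      _ ≤ ∫⁻ t in Set.Ioc (0:ℝ) r, ENNReal.ofReal (r^2 * w₃ r) * P t := by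
          refine setLIntegral_mono' measurableSet_Ioc fun t ht => ?_
          obtain ⟨ht0, htr⟩ := ht
          have key1 : (1:ℝ) ≤ r^2 * w₃ r * (w₁ t * w₂ t) := by
            have h2 : r^2 * w₃ r * (w₁ r * w₂ r) = 1 := by
              calc r^2 * w₃ r * (w₁ r * w₂ r) = (w₁ r * w₂ r * w₃ r) * r^2 := by ring
                _ = (r^2)⁻¹ * r^2 := by rw [hprod r hr]
                _ = 1 := inv_mul_cancel₀ (by positivity)
            have hle : w₁ r * w₂ r ≤ w₁ t * w₂ t :=
              mul_le_mul (hd₁ t r ht0 htr) (hd₂ t r ht0 htr) (hw₂ r hr).le (hw₁ t ht0).le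
            calc (1:ℝ) = r^2 * w₃ r * (w₁ r * w₂ r) := h2.symm
              _ ≤ r^2 * w₃ r * (w₁ t * w₂ t) := by
                  refine mul_le_mul_of_nonneg_left hle ?_
                  have := hw₃ r hr
                  positivity
          rw [hPval t ht0, Real.ennnorm_eq_ofReal_abs,
            ← ENNReal.ofReal_mul (mul_nonneg (by positivity) (hw₃ r hr).le : (0:ℝ) ≤ r^2 * w₃ r)]
          refine ENNReal.ofReal_le_ofReal ?_
          rw [abs_mul, abs_of_pos ht0]
          calc |Re2 ψ₁ ψ₂ t| * t ≤ ‖ψ₁ t‖ * ‖ψ₂ t‖ * t :=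
                mul_le_mul_of_nonneg_right (hre t) ht0.le
            _ = 1 * (‖ψ₁ t‖ * ‖ψ₂ t‖ * t) := (one_mul _).symm
            _ ≤ (r^2 * w₃ r * (w₁ t * w₂ t)) * (‖ψ₁ t‖ * ‖ψ₂ t‖ * t) :=
                mul_le_mul_of_nonneg_right key1 (by positivity)
            _ = r^2 * w₃ r * (w₁ t * ‖ψ₁ t‖ * (w₂ t * ‖ψ₂ t‖) * t) := by ring
      _ = ENNReal.ofReal (r^2 * w₃ r) * ∫⁻ t in Set.Ioc (0:ℝ) r, P t :=
          lintegral_const_mul' _ _ ENNReal.ofReal_ne_top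
      _ ≤ ENNReal.ofReal (r^2 * w₃ r) * J := by
          rw [hJ]
          exact mul_le_mul_left' (lintegral_mono_set Set.Ioc_subset_Ioi_self) _
  have hIoiJ : ∀ r : ℝ, 0 < r →
      (‖(∫ t in Set.Ioi r, Re2 ψ₁ ψ₂ t / t)‖₊ : ℝ≥0∞) ≤ ENNReal.ofReal (w₃ r) * J := by
    intro r hr
    calc (‖(∫ t in Set.Ioi r, Re2 ψ₁ ψ₂ t / t)‖₊ : ℝ≥0∞)
        ≤ ∫⁻ t in Set.Ioi r, ‖Re2 ψ₁ ψ₂ t / t‖₊ := ennnorm_integral_le_lintegral_ennnorm _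
      _ ≤ ∫⁻ t in Set.Ioi r, ENNReal.ofReal (w₃ r) * P t := by
          refine setLIntegral_mono' measurableSet_Ioi fun t ht => ?_
          have htr : r < t := ht
          have ht0 : 0 < t := hr.trans htr
          have key2 : (1:ℝ) ≤ w₃ r * (w₁ t * w₂ t) * t^2 := by
            have h4 : w₁ t * w₂ t * t^2 * w₃ t = 1 := by
              calc w₁ t * w₂ t * t^2 * w₃ t = (w₁ t * w₂ t * w₃ t) * t^2 := by ring
                _ = (t^2)⁻¹ * t^2 := by rw [hprod t ht0]
                _ = 1 := inv_mul_cancel₀ (by positivity)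
            have hX : (0:ℝ) < w₁ t * w₂ t * t^2 := by
              have h1 := hw₁ t ht0
              have h2 := hw₂ t ht0
              positivity
            have h5 := mul_le_mul_of_nonneg_left (hd₃ r t hr htr.le) hX.le
            nlinarith [h5, h4]
          rw [hPval t ht0, Real.ennnorm_eq_ofReal_abs,
            ← ENNReal.ofReal_mul (hw₃ r hr).le]
          refine ENNReal.ofReal_le_ofReal ?_
          rw [abs_div, abs_of_pos ht0, div_le_iff₀ ht0]
          calc |Re2 ψ₁ ψ₂ t| ≤ ‖ψ₁ t‖ * ‖ψ₂ t‖ := hre t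
            _ = (‖ψ₁ t‖ * ‖ψ₂ t‖) * 1 := (mul_one _).symm
            _ ≤ (‖ψ₁ t‖ * ‖ψ₂ t‖) * (w₃ r * (w₁ t * w₂ t) * t^2) :=
                mul_le_mul_of_nonneg_left key2 (by positivity)
            _ = w₃ r * (w₁ t * ‖ψ₁ t‖ * (w₂ t * ‖ψ₂ t‖) * t) * t := by ring
      _ = ENNReal.ofReal (w₃ r) * ∫⁻ t in Set.Ioi r, P t :=
          lintegral_const_mul' _ _ ENNReal.ofReal_ne_top
      _ ≤ ENNReal.ofReal (w₃ r) * J := by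
          rw [hJ]
          exact mul_le_mul_left' (lintegral_mono_set (Set.Ioi_subset_Ioi hr.le)) _
  -- pointwise bound
  have key : ∀ᵐ r ∂rmeas, (‖N3 k ψ₁ ψ₂ ψ₃ r‖₊ : ℝ≥0∞) ≤
      J * (ENNReal.ofReal (w₃ r) * ‖ψ₃ r‖₊) := by
    filter_upwards [rmeas_ae_pos] with r hr
    rcases hk with hk | hk <;> subst hk
    · have hN : N3 1 ψ₁ ψ₂ ψ₃ r = ((2 / r^2 * Atheta2 ψ₁ ψ₂ r : ℝ) : ℂ) * ψ₃ r := rfl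
      rw [hN, nnnorm_mul, ENNReal.coe_mul, Complex.nnnorm_real, Real.ennnorm_eq_ofReal_abs]
      have habs : |2 / r^2 * Atheta2 ψ₁ ψ₂ r| =
          (r^2)⁻¹ * |∫ t in (0:ℝ)..r, Re2 ψ₁ ψ₂ t * t| := by
        rw [Atheta2, abs_mul, abs_mul, abs_neg,
          abs_of_nonneg (by positivity : (0:ℝ) ≤ 2 / r^2),
          abs_of_nonneg (by norm_num : (0:ℝ) ≤ (1:ℝ)/2)]
        ring
      rw [habs, ENNReal.ofReal_mul (by positivity : (0:ℝ) ≤ (r^2)⁻¹),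
        ← Real.ennnorm_eq_ofReal_abs]
      calc ENNReal.ofReal ((r^2)⁻¹) * (‖∫ t in (0:ℝ)..r, Re2 ψ₁ ψ₂ t * t‖₊ : ℝ≥0∞) * ‖ψ₃ r‖₊
          ≤ ENNReal.ofReal ((r^2)⁻¹) * (ENNReal.ofReal (r^2 * w₃ r) * J) * ‖ψ₃ r‖₊ :=
            mul_le_mul_right' (mul_le_mul_left' (hIocJ r hr) _) _
        _ = (ENNReal.ofReal ((r^2)⁻¹) * ENNReal.ofReal (r^2 * w₃ r)) * J * ‖ψ₃ r‖₊ := by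
            ring
        _ = ENNReal.ofReal ((r^2)⁻¹ * (r^2 * w₃ r)) * J * ‖ψ₃ r‖₊ := by
            rw [ENNReal.ofReal_mul (by positivity : (0:ℝ) ≤ (r^2)⁻¹)]
        _ = J * (ENNReal.ofReal (w₃ r) * ‖ψ₃ r‖₊) := by
            rw [show (r^2)⁻¹ * (r^2 * w₃ r) = w₃ r from by field_simp]
            ring
    · have hN : N3 2 ψ₁ ψ₂ ψ₃ r =
          -(((∫ t in Set.Ioi r, Re2 ψ₁ ψ₂ t / t : ℝ)) : ℂ) * ψ₃ r := rfl
      rw [hN, neg_mul, nnnorm_neg, nnnorm_mul, ENNReal.coe_mul, Complex.nnnorm_real]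
      calc (‖∫ t in Set.Ioi r, Re2 ψ₁ ψ₂ t / t‖₊ : ℝ≥0∞) * ‖ψ₃ r‖₊
          ≤ (ENNReal.ofReal (w₃ r) * J) * ‖ψ₃ r‖₊ := mul_le_mul_right' (hIoiJ r hr) _
        _ = J * (ENNReal.ofReal (w₃ r) * ‖ψ₃ r‖₊) := by ring
  -- assembly
  set X : ℝ → ℝ≥0∞ := fun r => ENNReal.ofReal (w₃ r) * ‖ψ₃ r‖₊ with hX
  have hXaemeas : AEMeasurable X rmeas := by
    refine (hV₃m.mul hm₃.ennnorm).aemeasurable.congr ?_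
    filter_upwards [rmeas_ae_pos] with r hr
    rw [hX]
    simp only
    rw [Pi.mul_apply, hV₃ r hr]
  have hE₃eq : E₃ = (∫⁻ r, X r ^ (2:ℝ) ∂rmeas) ^ ((1:ℝ)/2) := by
    rw [hE₃, eLpNorm_eq_lintegral_rpow_nnnorm two_ne_zero ENNReal.two_ne_top, h2t]
    congr 1
    refine lintegral_congr_ae ?_
    filter_upwards [rmeas_ae_pos] with r hr
    congr 1
    rw [nnnorm_mul, ENNReal.coe_mul, Complex.nnnorm_real, Real.ennnorm_eq_ofReal (hw₃ r hr).le]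
  calc eLpNorm (N3 k ψ₁ ψ₂ ψ₃) 2 rmeas
      = (∫⁻ r, (‖N3 k ψ₁ ψ₂ ψ₃ r‖₊ : ℝ≥0∞) ^ (2:ℝ) ∂rmeas) ^ ((1:ℝ)/2) := by
        rw [eLpNorm_eq_lintegral_rpow_nnnorm two_ne_zero ENNReal.two_ne_top, h2t]
    _ ≤ (∫⁻ r, (J * X r) ^ (2:ℝ) ∂rmeas) ^ ((1:ℝ)/2) := by
        refine ENNReal.rpow_le_rpow ?_ (by norm_num)
        refine lintegral_mono_ae ?_
        filter_upwards [key] with r hrkey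
        exact ENNReal.rpow_le_rpow hrkey (by norm_num)
    _ = (J ^ (2:ℝ) * ∫⁻ r, X r ^ (2:ℝ) ∂rmeas) ^ ((1:ℝ)/2) := by
        congr 1
        rw [← lintegral_const_mul'' _ (hXaemeas.pow_const _)]
        exact lintegral_congr fun r => ENNReal.mul_rpow_of_nonneg _ _ (by norm_num)
    _ = J * (∫⁻ r, X r ^ (2:ℝ) ∂rmeas) ^ ((1:ℝ)/2) := by
        rw [ENNReal.mul_rpow_of_nonneg _ _ (by norm_num : (0:ℝ) ≤ 1/2), ← ENNReal.rpow_mul]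
        norm_num
    _ ≤ (E₁ * E₂) * E₃ := by
        rw [← hE₃eq]
        exact mul_le_mul_right' hCS _
    _ = ENNReal.ofReal 1 * E₁ * E₂ * E₃ := by
        rw [ENNReal.ofReal_one, one_mul]
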